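/- Replicating a set of vertices is order-independent: for a finite simple graph G and a finite set W of its vertices, the graph obtained by replicating the vertices of W one at a time (adding for each w a new clone w' adjacent to w and to all current neighbours of w) does not depend on the order in which the vertices of W are replicated. -/

import Mathlib

/-- Replicating a single vertex `w`: add one new vertex (the `Sum.inr` element)
adjacent to `w` and to all neighbours of `w`. -/
def SimpleGraph.replicateOne {V : Type} (G : SimpleGraph V) (w : V) :
    SimpleGraph (V ⊕ Unit) where
  Adj x y :=
    match x, y with
    | Sum.inl a, Sum.inl b => G.Adj a b
    | Sum.inl a, Sum.inr _ => G.Adj a w ∨ a = w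
    | Sum.inr _, Sum.inl b => G.Adj w b ∨ w = b
    | Sum.inr _, Sum.inr _ => False
  symm := by
    constructor
    rintro (a | a) (b | b) h <;> simp only at h ⊢ <;>
      first
        | exact G.adj_symm h
        | (rcases h with h | h
           · exact Or.inl (G.adj_symm h)
           · exact Or.inr h.symm)
        | exact h
  loopless := by
    constructor
    rintro (a | a) h <;> simp only at h; exact G.loopless.irrefl _ h

/-- Replicating the vertices of a list `l`, one at a time, from the head on. -/
def replicateList (V : Type) (G : SimpleGraph V) :
    (l : List V) → Σ V' : Type, SimpleGraph V'
  | [] => ⟨V, G⟩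
  | w :: l => replicateList (V ⊕ Unit) (G.replicateOne w) (l.map Sum.inl)
termination_by l => l.length
decreasing_by simp [List.length_map]

theorem replicateList_nil (V : Type) (G : SimpleGraph V) :
    replicateList V G [] = ⟨V, G⟩ := by rw [replicateList]

theorem replicateList_cons (V : Type) (G : SimpleGraph V) (w : V) (l : List V) :
    replicateList V G (w :: l)
      = replicateList (V ⊕ Unit) (G.replicateOne w) (l.map Sum.inl) := by
  rw [replicateList]

/-- Congruence of `replicateOne` along an isomorphism. -/
def replicateOneCongr {V V' : Type} {G : SimpleGraph V} {G' : SimpleGraph V'}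
    (e : G ≃g G') (w : V) : G.replicateOne w ≃g G'.replicateOne (e w) where
  toEquiv := Equiv.sumCongr e.toEquiv (Equiv.refl Unit)
  map_rel_iff' := by
    rintro (a | a) (b | b)
    · exact e.map_adj_iff
    · show (G'.Adj (e a) (e w) ∨ e a = e w) ↔ (G.Adj a w ∨ a = w)
      rw [e.map_adj_iff, EquivLike.apply_eq_iff_eq]
    · show (G'.Adj (e w) (e b) ∨ e w = e b) ↔ (G.Adj w b ∨ w = b)
      rw [e.map_adj_iff, EquivLike.apply_eq_iff_eq]
    · exact Iff.rfl

/-- Swapping the order of two consecutive replications. -/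
def replicateSwapIso {V : Type} (G : SimpleGraph V) (a b : V) :
    (G.replicateOne a).replicateOne (Sum.inl b)
      ≃g (G.replicateOne b).replicateOne (Sum.inl a) where
  toEquiv :=
    { toFun := fun x => match x with
        | Sum.inl (Sum.inl v) => Sum.inl (Sum.inl v)
        | Sum.inl (Sum.inr u) => Sum.inr u
        | Sum.inr u => Sum.inl (Sum.inr u)
      invFun := fun x => match x with
        | Sum.inl (Sum.inl v) => Sum.inl (Sum.inl v)
        | Sum.inl (Sum.inr u) => Sum.inr u
        | Sum.inr u => Sum.inl (Sum.inr u)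
      left_inv := by rintro ((v | u) | u) <;> rfl
      right_inv := by rintro ((v | u) | u) <;> rfl }
  map_rel_iff' := by
    rintro ((u | x) | x) ((v | y) | y) <;>
      simp [SimpleGraph.replicateOne] <;> tauto

theorem replicateList_congr :
    ∀ {V₀ V' : Type} (l : List V₀) (G : SimpleGraph V₀) (G' : SimpleGraph V')
      (e : G ≃g G'),
      Nonempty ((replicateList V₀ G l).2 ≃g (replicateList V' G' (l.map e)).2)
  | _, _, [], G, G', e => by
    rw [List.map_nil, replicateList_nil, replicateList_nil]; exact ⟨e⟩
  | _, _, w :: t, G, G', e => by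
    rw [List.map_cons, replicateList_cons, replicateList_cons]
    have key := replicateList_congr (t.map Sum.inl) (G.replicateOne w)
      (G'.replicateOne (e w)) (replicateOneCongr e w)
    rwa [List.map_map, show ((replicateOneCongr e w : _ → _) ∘ Sum.inl)
      = Sum.inl ∘ (e : _ → _) from rfl, ← List.map_map] at key
termination_by _ _ l => l.length
decreasing_by simp [List.length_map]

theorem perm_main {V₀ : Type} {l₁ l₂ : List V₀} (h : l₁.Perm l₂) :
    ∀ {V : Type} (G : SimpleGraph V) (f : V₀ → V),
      Nonempty ((replicateList V G (l₁.map f)).2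
        ≃g (replicateList V G (l₂.map f)).2) := by
  induction h with
  | nil => exact fun G f => ⟨RelIso.refl _⟩
  | cons x h ih =>
    intro V G f
    rw [List.map_cons, List.map_cons, replicateList_cons, replicateList_cons,
      List.map_map, List.map_map]
    exact ih (G.replicateOne (f x)) (Sum.inl ∘ f)
  | swap x y t =>
    intro V G f
    rw [List.map_cons, List.map_cons, List.map_cons, List.map_cons,
      replicateList_cons, replicateList_cons, List.map_cons, List.map_cons,
      replicateList_cons, replicateList_cons]
    have key := replicateList_congr ((t.map f).map Sum.inl |>.map Sum.inl)
      ((G.replicateOne (f y)).replicateOne (Sum.inl (f x)))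
      ((G.replicateOne (f x)).replicateOne (Sum.inl (f y)))
      (replicateSwapIso G (f y) (f x))
    rwa [show (List.map (⇑(replicateSwapIso G (f y) (f x)))
        (List.map Sum.inl (List.map Sum.inl (List.map f t))))
      = List.map Sum.inl (List.map Sum.inl (List.map f t)) by
        simp only [List.map_map]; rfl] at key
  | trans _ _ ih1 ih2 =>
    intro V G f
    exact (ih1 G f).elim fun e1 => (ih2 G f).elim fun e2 => ⟨e1.trans e2⟩

/-- Replication of a finite set of vertices is order-independent: replicating
the elements of `W` one at a time, in any two orders, produces isomorphic
graphs. -/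
theorem replication_order_independent {V : Type} (G : SimpleGraph V)
    (W : Finset V) (l₁ l₂ : List V) (h₁ : l₁.Nodup) (h₂ : l₂.Nodup)
    (hW₁ : ∀ v, v ∈ l₁ ↔ v ∈ W) (hW₂ : ∀ v, v ∈ l₂ ↔ v ∈ W) :
    Nonempty ((replicateList V G l₁).2 ≃g (replicateList V G l₂).2) := by
  have hperm : l₁.Perm l₂ := by
    rw [List.perm_ext_iff_of_nodup h₁ h₂]
    intro a; rw [hW₁, hW₂]
  have := perm_main hperm G id
  rwa [List.map_id, List.map_id] at this
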